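/- Let X be a Banach lattice whose order continuous dual X_n^~ is order continuous and contains a strictly positive element. Then for every norm bounded convex set C ⊆ X, the σ(X, X_n^~)-closure of C equals the |σ|(X, X_n^~)-sequential closure of C (the set of f such that some sequence (f_n) in C satisfies |f_n − f| → 0 in σ(X, X_n^~)). -/

import Mathlib

open Filter Topology Pointwise

noncomputable section

/-- A directed index type for nets. -/
structure DirectedType : Type 1 where
  ι : Type
  r : ι → ι → Prop
  nonempty : Nonempty ι
  refl : ∀ a, r a a
  trans : ∀ a b c, r a b → r b c → r a c
  directed : ∀ a b, ∃ c, r a c ∧ r b c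

/-- The natural numbers as a directed type (for sequences). -/
def natDir : DirectedType where
  ι := ℕ
  r := (· ≤ ·)
  nonempty := ⟨0⟩
  refl := fun _ => le_refl _
  trans := fun _ _ _ => le_trans
  directed := fun a b => ⟨max a b, le_max_left _ _, le_max_right _ _⟩

/-- A real valued net tends to zero. -/
def NetTendstoZero (D : DirectedType) (u : D.ι → ℝ) : Prop :=
  ∀ ε : ℝ, 0 < ε → ∃ i₀, ∀ i, D.r i₀ i → |u i| < ε

variable {X : Type*} [NormedAddCommGroup X] [Lattice X] [HasSolidNorm X] [IsOrderedAddMonoid X] [NormedSpace ℝ X]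

/-- Order convergence of a net: there is a decreasing net `h` with infimum `0`
dominating `|f i - x|` eventually. -/
def OrderConvNet (D : DirectedType) (f : D.ι → X) (x : X) : Prop :=
  ∃ (E : DirectedType) (h : E.ι → X),
    (∀ γ₁ γ₂, E.r γ₁ γ₂ → h γ₂ ≤ h γ₁) ∧ IsGLB (Set.range h) 0 ∧
      ∀ γ, ∃ i₀, ∀ i, D.r i₀ i → |f i - x| ≤ h γ

/-- The order closure of a set: all limits of order convergent nets from the set. -/
def OrderClosure (C : Set X) : Set X :=
  {x | ∃ (D : DirectedType) (f : D.ι → X), (∀ i, f i ∈ C) ∧ OrderConvNet D f x}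

/-- A set is order closed if it contains all order limits of nets from it. -/
def IsOrderClosed (C : Set X) : Prop := OrderClosure C ⊆ C

/-- Unbounded order convergence of a net. -/
def UOConvNet (D : DirectedType) (f : D.ι → X) (x : X) : Prop :=
  ∀ h : X, 0 ≤ h → OrderConvNet D (fun i => |f i - x| ⊓ h) 0

/-- Membership in the order continuous dual `X_n^~`. -/
def InOCDual (g : X →L[ℝ] ℝ) : Prop :=
  ∀ (D : DirectedType) (f : D.ι → X), OrderConvNet D f 0 →
    NetTendstoZero D fun i => g (f i)

/-- Membership in the unbounded order continuous dual `X_uo^~`. -/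
def InUODual (g : X →L[ℝ] ℝ) : Prop :=
  ∀ (D : DirectedType) (f : D.ι → X), (∃ M, ∀ i, ‖f i‖ ≤ M) → UOConvNet D f 0 →
    NetTendstoZero D fun i => g (f i)

/-- Convergence of a net in the topology `σ(X, X_n^~)`. -/
def SigmaNConvNet (D : DirectedType) (f : D.ι → X) (x : X) : Prop :=
  ∀ g : X →L[ℝ] ℝ, InOCDual g → NetTendstoZero D fun i => g (f i) - g x

/-- Convergence of a net in the topology `σ(X, X_uo^~)`. -/
def SigmaUOConvNet (D : DirectedType) (f : D.ι → X) (x : X) : Prop :=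
  ∀ g : X →L[ℝ] ℝ, InUODual g → NetTendstoZero D fun i => g (f i) - g x

/-- A set is `σ(X, X_n^~)`-closed. -/
def IsSigmaNClosed (C : Set X) : Prop :=
  ∀ (D : DirectedType) (f : D.ι → X), (∀ i, f i ∈ C) →
    ∀ x, SigmaNConvNet D f x → x ∈ C

/-- A set is `σ(X, X_uo^~)`-closed. -/
def IsSigmaUOClosed (C : Set X) : Prop :=
  ∀ (D : DirectedType) (f : D.ι → X), (∀ i, f i ∈ C) →
    ∀ x, SigmaUOConvNet D f x → x ∈ C

/-- The `σ(X, X_n^~)`-closure of a set. -/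
def SigmaNClosure (C : Set X) : Set X :=
  {x | ∃ (D : DirectedType) (f : D.ι → X), (∀ i, f i ∈ C) ∧ SigmaNConvNet D f x}

/-- The `|σ|(X, X_n^~)`-sequential closure of a set. -/
def AbsSigmaSeqClosure (C : Set X) : Set X :=
  {x | ∃ s : ℕ → X, (∀ n, s n ∈ C) ∧
    ∀ g : X →L[ℝ] ℝ, InOCDual g → Tendsto (fun n => g (|s n - x|)) atTop (𝓝 0)}

/-- A set is `|σ|(X, X_n^~)`-sequentially closed. -/
def IsAbsSigmaSeqClosed (C : Set X) : Prop := AbsSigmaSeqClosure C ⊆ C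

/-- The order on the dual: `g ≤ h` iff `g x ≤ h x` on the positive cone. -/
def dualLE (g h : X →L[ℝ] ℝ) : Prop := ∀ x : X, 0 ≤ x → g x ≤ h x

/-- Order continuity of the norm on a subset `S` of the dual: every net in `S`
decreasing to `0` (infimum `0` among lower bounds from `S`) converges to `0` in
the operator norm. -/
def DualOCOn (S : Set (X →L[ℝ] ℝ)) : Prop :=
  ∀ (D : DirectedType) (f : D.ι → (X →L[ℝ] ℝ)), (∀ i, f i ∈ S) →
    (∀ i j, D.r i j → dualLE (f j) (f i)) → (∀ i, dualLE 0 (f i)) →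
    (∀ h ∈ S, (∀ i, dualLE h (f i)) → dualLE h 0) →
    NetTendstoZero D fun i => ‖f i‖

/-- A sequence is weakly null. -/
def WeaklyNull (f : ℕ → X) : Prop :=
  ∀ g : X →L[ℝ] ℝ, Tendsto (fun n => g (f n)) atTop (𝓝 0)

/-- The sequence satisfies a lower `ℓ¹`-estimate, i.e. it is equivalent to the
unit vector basis of `ℓ¹`. -/
def IsL1Basic (f : ℕ → X) : Prop :=
  ∃ M : ℝ, 0 < M ∧ ∀ (m : ℕ) (a : ℕ → ℝ),
    (1 / M) * ∑ k ∈ Finset.range m, |a k| ≤ ‖∑ k ∈ Finset.range m, a k • f k‖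

variable (X)

/-- Order continuity of the norm of `X`. -/
def OCNorm : Prop :=
  ∀ (D : DirectedType) (f : D.ι → X), (∀ i j, D.r i j → f j ≤ f i) →
    IsGLB (Set.range f) 0 → NetTendstoZero D fun i => ‖f i‖

/-- The order continuous dual as a set of continuous linear functionals. -/
def OCDual : Set (X →L[ℝ] ℝ) := {g | InOCDual g}

/-- The norm dual `X*` is order continuous. -/
def DualOrderContinuous : Prop := DualOCOn (Set.univ : Set (X →L[ℝ] ℝ))

/-- The order continuous dual `X_n^~` is order continuous. -/
def OCDualOrderContinuous : Prop := DualOCOn (OCDual X)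

/-- `X` is monotonically complete. -/
def MonotonicallyComplete : Prop :=
  ∀ (D : DirectedType) (f : D.ι → X), (∀ i j, D.r i j → f i ≤ f j) →
    (∃ M, ∀ i, ‖f i‖ ≤ M) → ∃ s, IsLUB (Set.range f) s

/-- `X` is Dedekind complete. -/
def DedekindComplete : Prop :=
  ∀ S : Set X, S.Nonempty → BddAbove S → ∃ s, IsLUB S s

/-- `X` is σ-Dedekind complete. -/
def SigmaDedekindComplete : Prop :=
  ∀ f : ℕ → X, BddAbove (Set.range f) → ∃ s, IsLUB (Set.range f) s

/-- `X` has the weak Fatou property. -/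
def WeakFatou : Prop :=
  ∃ r : ℝ, 0 < r ∧ ∀ (D : DirectedType) (f : D.ι → X),
    (∀ i j, D.r i j → f i ≤ f j) → ∀ s, IsLUB (Set.range f) s →
    ∀ M : ℝ, (∀ i, ‖f i‖ ≤ M) → ‖s‖ ≤ r * M

/-- `X_n^~` separates the points of `X`. -/
def OCDualSeparatesPoints : Prop :=
  ∀ x : X, x ≠ 0 → ∃ g : X →L[ℝ] ℝ, InOCDual g ∧ g x ≠ 0

/-- `X_n^~` contains a strictly positive element. -/
def HasStrictlyPositiveOCFunctional : Prop :=
  ∃ g : X →L[ℝ] ℝ, InOCDual g ∧ ∀ x : X, x ≠ 0 → 0 < g (|x|)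

/-- The unit ball `B` determined by `X_n^~`. -/
def KSBall : Set X :=
  {x | ∀ g : X →L[ℝ] ℝ, InOCDual g → dualLE 0 g → ‖g‖ ≤ 1 → g (|x|) ≤ 1}

/-- `σ(X, X_n^~)` has the Krein–Smulian property. -/
def KreinSmulianProperty : Prop :=
  ∀ C : Set X, Convex ℝ C →
    (∀ k : ℕ, IsSigmaNClosed (C ∩ (k : ℝ) • KSBall X)) → IsSigmaNClosed C

/-- Property `P1`: every order closed convex set is `σ(X, X_n^~)`-closed. -/
def PropP1 : Prop := ∀ C : Set X, Convex ℝ C → IsOrderClosed C → IsSigmaNClosed C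

/-- Property `P4`: every norm bounded order closed convex set is
`|σ|(X, X_n^~)`-sequentially closed. -/
def PropP4 : Prop :=
  ∀ C : Set X, Convex ℝ C → (∃ M, ∀ x ∈ C, ‖x‖ ≤ M) → IsOrderClosed C →
    IsAbsSigmaSeqClosed C

/-- The disjoint order continuity property. -/
def DOCP : Prop :=
  ∀ f : ℕ → X, (∀ n, 0 ≤ f n) → (∃ M, ∀ n, ‖f n‖ ≤ M) →
    (∀ n m, n ≠ m → f n ⊓ f m = 0) →
    (∀ g : X →L[ℝ] ℝ, InOCDual g → Tendsto (fun n => g (f n)) atTop (𝓝 0)) →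
    WeaklyNull f

/-- The order continuous part `X_a` of `X`. -/
def OrderContPart : Set X :=
  {f | ∀ (D : DirectedType) (g : D.ι → X), (∀ i, |g i| ≤ |f|) →
    OrderConvNet D g 0 → NetTendstoZero D fun i => ‖g i‖}

/-- The order subsequence splitting property. -/
def OSSP : Prop :=
  ∀ f : ℕ → X, (∀ n, 0 ≤ f n) → (∃ M, ∀ n, ‖f n‖ ≤ M) → UOConvNet natDir f 0 →
    ∃ φ : ℕ → ℕ, StrictMono φ ∧ ∃ x y z : ℕ → X,
      (∀ k, f (φ k) = x k + y k + z k) ∧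
      (∀ k, 0 ≤ x k) ∧ (∀ k, 0 ≤ y k) ∧ (∀ k, 0 ≤ z k) ∧
      (∀ k, x k ∈ OrderContPart X) ∧
      (∀ k l, k ≠ l → y k ⊓ y l = 0) ∧
      (∃ b, ∀ k, z k ≤ b)

variable {X}

/- ===================== Auxiliary development ===================== -/

namespace S14

variable {X : Type*} [NormedAddCommGroup X] [Lattice X] [HasSolidNorm X] [IsOrderedAddMonoid X] [NormedSpace ℝ X]

/-! ### Order and scalar multiplication compatibility -/

lemma inf_le_add_inf {a b c : X} (ha : 0 ≤ a) (hb : 0 ≤ b) (hc : 0 ≤ c) :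
    a ⊓ (b + c) ≤ a ⊓ b + a ⊓ c := by
  have h1 : a ⊓ b + a ⊓ c = ((a + a) ⊓ (a + c)) ⊓ ((b + a) ⊓ (b + c)) := by
    rw [inf_add, add_inf, add_inf]
  rw [h1]
  refine le_inf (le_inf ?_ ?_) (le_inf ?_ ?_)
  · exact inf_le_left.trans (le_add_of_nonneg_right ha)
  · exact inf_le_left.trans (le_add_of_nonneg_right hc)
  · exact inf_le_left.trans (le_add_of_nonneg_left hb)
  · exact inf_le_right

lemma disjoint_nsmul {a b : X} (ha : 0 ≤ a) (hb : 0 ≤ b) (h : a ⊓ b = 0) :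
    ∀ n : ℕ, a ⊓ (n • b) = 0 := by
  intro n
  induction n with
  | zero => rw [zero_nsmul]; exact inf_eq_right.2 ha
  | succ n ih =>
    refine le_antisymm ?_ (le_inf ha (nsmul_nonneg hb _))
    calc a ⊓ ((n+1) • b) = a ⊓ (n • b + b) := by rw [succ_nsmul]
    _ ≤ a ⊓ (n • b) + a ⊓ b := inf_le_add_inf ha (nsmul_nonneg hb n) hb
    _ = 0 := by rw [ih, h, add_zero]

lemma nonneg_of_nsmul_nonneg {v : X} {n : ℕ} (hn : 0 < n) (h : 0 ≤ n • v) : 0 ≤ v := by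
  have hd : v⁻ ⊓ v⁺ = 0 := by rw [inf_comm]; exact posPart_inf_negPart_eq_zero v
  have h1 : v⁻ ⊓ (n • v⁺) = 0 := disjoint_nsmul (negPart_nonneg v) (posPart_nonneg v) hd n
  have h1' : (n • v⁺) ⊓ v⁻ = 0 := by rw [inf_comm]; exact h1
  have h2 : (n • v⁺) ⊓ (n • v⁻) = 0 :=
    disjoint_nsmul (nsmul_nonneg (posPart_nonneg v) n) (negPart_nonneg v) h1' n
  have h3 : n • v⁻ ≤ n • v⁺ := by
    have hv : n • v = n • v⁺ - n • v⁻ := by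
      rw [← nsmul_sub, posPart_sub_negPart]
    rw [hv] at h
    exact sub_nonneg.1 h
  have h4 : n • v⁻ = 0 := by
    have h5 := inf_eq_right.2 h3
    rw [h2] at h5; exact h5.symm
  have h5 : v⁻ ≤ 0 := by
    obtain ⟨m, rfl⟩ := Nat.exists_eq_succ_of_ne_zero hn.ne'
    calc v⁻ ≤ (m+1) • v⁻ := by
          rw [succ_nsmul]
          exact le_add_of_nonneg_left (nsmul_nonneg (negPart_nonneg v) m)
    _ = 0 := h4
  exact negPart_eq_zero.1 (le_antisymm h5 (negPart_nonneg v))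

lemma smul_nonneg_of_nonneg {t : ℝ} (ht : 0 ≤ t) {v : X} (hv : 0 ≤ v) : 0 ≤ t • v := by
  have hdiv : ∀ (a b : ℕ), 0 ≤ (((a:ℝ)/(b:ℝ))) • v := by
    intro a b
    rcases Nat.eq_zero_or_pos b with hb | hb
    · simp [hb]
    · refine nonneg_of_nsmul_nonneg hb ?_
      have hb' : ((b:ℝ)) ≠ 0 := Nat.cast_ne_zero.2 hb.ne'
      have heq : b • (((a:ℝ)/(b:ℝ)) • v) = a • v := by
        rw [← Nat.cast_smul_eq_nsmul ℝ b, smul_smul, ← Nat.cast_smul_eq_nsmul ℝ a]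
        congr 1
        field_simp
      rw [heq]
      exact nsmul_nonneg hv a
  have hclosed : IsClosed {s : ℝ | 0 ≤ s • v} :=
    isClosed_nonneg.preimage (continuous_id.smul continuous_const)
  have hseq : ∀ n : ℕ, ∃ s : ℝ, 0 ≤ s • v ∧ |t - s| < 1/((n:ℝ)+1) := by
    intro n
    obtain ⟨q, hq⟩ := exists_rat_near t (by positivity : (0:ℝ) < 1/((n:ℝ)+1))
    by_cases hq0 : 0 ≤ q
    · refine ⟨(q:ℝ), ?_, hq⟩
      have hcast : (q:ℝ) = ((q.num.toNat : ℕ):ℝ)/((q.den : ℕ):ℝ) := by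
        rw [Rat.cast_def]
        congr 1
        exact_mod_cast (Int.toNat_of_nonneg (Rat.num_nonneg.2 hq0)).symm
      rw [hcast]; exact hdiv _ _
    · push_neg at hq0
      refine ⟨0, by simp, ?_⟩
      have hql : (q:ℝ) < 0 := by exact_mod_cast hq0
      have h2 : 0 ≤ t - (q:ℝ) := by linarith
      rw [sub_zero, abs_of_nonneg ht]
      calc t ≤ t - (q:ℝ) := by linarith
      _ = |t - (q:ℝ)| := (abs_of_nonneg h2).symm
      _ < _ := hq
  choose s hs0 hs1 using hseq
  have hst : Filter.Tendsto s Filter.atTop (nhds t) := by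
    rw [Metric.tendsto_atTop]
    intro ε hε
    obtain ⟨N, hN⟩ := exists_nat_gt (1/ε)
    refine ⟨N, fun n hn => ?_⟩
    have hn' : (N:ℝ) ≤ (n:ℝ) := Nat.cast_le.2 hn
    have h3 : 1/ε < (n:ℝ) + 1 := by linarith
    have h4 : 1/((n:ℝ)+1) < ε := by
      rw [div_lt_iff₀ (by positivity)]
      rw [div_lt_iff₀ hε] at h3
      nlinarith
    calc dist (s n) t = |t - s n| := by rw [dist_comm, Real.dist_eq]
    _ < 1/((n:ℝ)+1) := hs1 n
    _ < ε := h4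
  exact hclosed.mem_of_tendsto hst (Filter.Eventually.of_forall hs0)

lemma smul_le_smul_left' {t : ℝ} (ht : 0 ≤ t) {a b : X} (h : a ≤ b) : t • a ≤ t • b := by
  have h1 := smul_nonneg_of_nonneg ht (sub_nonneg.2 h)
  rw [smul_sub] at h1
  exact sub_nonneg.1 h1

lemma smul_sup_eq (t : ℝ) (ht : 0 ≤ t) (a b : X) : t • (a ⊔ b) = t • a ⊔ t • b := by
  rcases eq_or_lt_of_le ht with rfl | ht'
  · simp
  · refine le_antisymm ?_
      (sup_le (smul_le_smul_left' ht le_sup_left) (smul_le_smul_left' ht le_sup_right))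
    have h1 : a ⊔ b ≤ t⁻¹ • (t • a ⊔ t • b) := by
      refine sup_le ?_ ?_
      · have h2 := smul_le_smul_left' (inv_nonneg.2 ht) (le_sup_left : t • a ≤ t • a ⊔ t • b)
        rwa [smul_smul, inv_mul_cancel₀ ht'.ne', one_smul] at h2
      · have h2 := smul_le_smul_left' (inv_nonneg.2 ht) (le_sup_right : t • b ≤ t • a ⊔ t • b)
        rwa [smul_smul, inv_mul_cancel₀ ht'.ne', one_smul] at h2
    have h3 := smul_le_smul_left' ht h1
    rwa [smul_smul, mul_inv_cancel₀ ht'.ne', one_smul] at h3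

lemma abs_smul_eq (t : ℝ) (ht : 0 ≤ t) (y : X) : |t • y| = t • |y| := by
  have h1 : |t • y| = (t • y)⁺ + (t • y)⁻ := (posPart_add_negPart _).symm
  have h2 : (t • y)⁺ = t • y⁺ := by
    rw [posPart_def, posPart_def, smul_sup_eq t ht y 0, smul_zero]
  have h3 : (t • y)⁻ = t • y⁻ := by
    rw [negPart_def, negPart_def, smul_sup_eq t ht (-y) 0, smul_zero, smul_neg]
  rw [h1, h2, h3, ← smul_add, posPart_add_negPart]

/-! ### Positivity helpers for functionals -/

lemma strictpos_nonneg {g₀ : X →L[ℝ] ℝ} (hstrict : ∀ x : X, x ≠ 0 → 0 < g₀ |x|) :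
    ∀ v : X, 0 ≤ v → 0 ≤ g₀ v := by
  intro v hv
  rcases eq_or_ne v 0 with rfl | hne
  · simp
  · have h1 := hstrict v hne
    rw [abs_of_nonneg hv] at h1
    exact h1.le

lemma pos_monotone {g : X →L[ℝ] ℝ} (hpos : ∀ v : X, 0 ≤ v → 0 ≤ g v)
    {a b : X} (hab : a ≤ b) : g a ≤ g b := by
  have h1 := hpos _ (sub_nonneg.2 hab)
  rw [map_sub] at h1
  linarith

/-! ### The supremum functional and the positive part of a functional -/

def qs (g : X →L[ℝ] ℝ) (z : X) : Set ℝ := (fun w => g w) '' Set.Icc 0 z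

lemma qs_nonempty (g : X →L[ℝ] ℝ) {z : X} (hz : 0 ≤ z) : (qs g z).Nonempty :=
  ⟨g 0, ⟨0, Set.mem_Icc.2 ⟨le_refl 0, hz⟩, rfl⟩⟩

lemma qs_upper (g : X →L[ℝ] ℝ) (z : X) : ‖g‖ * ‖z‖ ∈ upperBounds (qs g z) := by
  rintro r ⟨w, hw, rfl⟩
  rw [Set.mem_Icc] at hw
  have h1 : ‖w‖ ≤ ‖z‖ := HasSolidNorm.solid (by
    rw [abs_of_nonneg hw.1, abs_of_nonneg (hw.1.trans hw.2)]; exact hw.2)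
  calc g w ≤ |g w| := le_abs_self _
  _ = ‖g w‖ := (Real.norm_eq_abs _).symm
  _ ≤ ‖g‖ * ‖w‖ := g.le_opNorm w
  _ ≤ ‖g‖ * ‖z‖ := mul_le_mul_of_nonneg_left h1 (norm_nonneg g)

lemma qs_bddAbove (g : X →L[ℝ] ℝ) (z : X) : BddAbove (qs g z) := ⟨_, qs_upper g z⟩

def qf (g : X →L[ℝ] ℝ) (z : X) : ℝ := sSup (qs g z)

lemma le_qf (g : X →L[ℝ] ℝ) {z w : X} (hw : 0 ≤ w) (hwz : w ≤ z) : g w ≤ qf g z :=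
  le_csSup (qs_bddAbove g z) ⟨w, Set.mem_Icc.2 ⟨hw, hwz⟩, rfl⟩

lemma qf_le (g : X →L[ℝ] ℝ) {z : X} (hz : 0 ≤ z) {B : ℝ}
    (hB : ∀ w, 0 ≤ w → w ≤ z → g w ≤ B) : qf g z ≤ B := by
  refine csSup_le (qs_nonempty g hz) ?_
  rintro r ⟨w, hw, rfl⟩
  rw [Set.mem_Icc] at hw
  exact hB w hw.1 hw.2

lemma qf_nonneg (g : X →L[ℝ] ℝ) {z : X} (hz : 0 ≤ z) : 0 ≤ qf g z := by
  have h1 := le_qf g (le_refl (0:X)) hz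
  rwa [map_zero] at h1

lemma qf_zero (g : X →L[ℝ] ℝ) : qf g 0 = 0 := by
  refine le_antisymm (qf_le g le_rfl fun w hw hw' => ?_) (qf_nonneg g le_rfl)
  have hw0 : w = 0 := le_antisymm hw' hw
  simp [hw0]

lemma qf_mono (g : X →L[ℝ] ℝ) {y z : X} (hy : 0 ≤ y) (hyz : y ≤ z) : qf g y ≤ qf g z :=
  qf_le g hy fun w hw hwy => le_qf g hw (hwy.trans hyz)

lemma qf_norm_le (g : X →L[ℝ] ℝ) {z : X} (hz : 0 ≤ z) : qf g z ≤ ‖g‖ * ‖z‖ :=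
  csSup_le (qs_nonempty g hz) (qs_upper g z)

lemma riesz_decomp {w y z : X} (hw : 0 ≤ w) (hy : 0 ≤ y) (hz : 0 ≤ z) (hwyz : w ≤ y + z) :
    ∃ w₁ w₂, 0 ≤ w₁ ∧ w₁ ≤ y ∧ 0 ≤ w₂ ∧ w₂ ≤ z ∧ w = w₁ + w₂ := by
  refine ⟨w ⊓ y, w - w ⊓ y, le_inf hw hy, inf_le_right, sub_nonneg.2 inf_le_left, ?_, by abel⟩
  have h1 : w - w ⊓ y = (w - w) ⊔ (w - y) := sub_inf w y w
  rw [h1, sub_self]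
  refine sup_le hz (by rwa [sub_le_iff_le_add, add_comm])

lemma qf_add (g : X →L[ℝ] ℝ) {y z : X} (hy : 0 ≤ y) (hz : 0 ≤ z) :
    qf g (y + z) = qf g y + qf g z := by
  have hyz : 0 ≤ y + z := add_nonneg hy hz
  refine le_antisymm ?_ ?_
  · refine qf_le g hyz fun w hw hwyz => ?_
    obtain ⟨w₁, w₂, h1, h2, h3, h4, rfl⟩ := riesz_decomp hw hy hz hwyz
    rw [map_add]
    exact add_le_add (le_qf g h1 h2) (le_qf g h3 h4)
  · have key : ∀ w₁, 0 ≤ w₁ → w₁ ≤ y → ∀ w₂, 0 ≤ w₂ → w₂ ≤ z →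
        g w₁ + g w₂ ≤ qf g (y + z) := by
      intro w₁ a1 a2 w₂ b1 b2
      rw [← map_add]
      exact le_qf g (add_nonneg a1 b1) (add_le_add a2 b2)
    have h5 : ∀ w₂, 0 ≤ w₂ → w₂ ≤ z → qf g y + g w₂ ≤ qf g (y+z) := by
      intro w₂ b1 b2
      have h6 : qf g y ≤ qf g (y + z) - g w₂ :=
        qf_le g hy (fun w₁ a1 a2 => by linarith [key w₁ a1 a2 w₂ b1 b2])
      linarith
    have h7 : qf g z ≤ qf g (y + z) - qf g y :=
      qf_le g hz (fun w₂ b1 b2 => by linarith [h5 w₂ b1 b2])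
    linarith

def pfun (g : X →L[ℝ] ℝ) (y : X) : ℝ := qf g (y⁺) - qf g (y⁻)

lemma pfun_decomp (g : X →L[ℝ] ℝ) {r s y : X} (hr : 0 ≤ r) (hs : 0 ≤ s) (h : r - s = y) :
    pfun g y = qf g r - qf g s := by
  have h2 : r - s = y⁺ - y⁻ := by rw [h, posPart_sub_negPart]
  have h1 : r + y⁻ = y⁺ + s := sub_eq_sub_iff_add_eq_add.1 h2
  have h3 : qf g r + qf g (y⁻) = qf g (y⁺) + qf g s := by
    rw [← qf_add g hr (negPart_nonneg y), ← qf_add g (posPart_nonneg y) hs, h1]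
  unfold pfun
  linarith

lemma pfun_add (g : X →L[ℝ] ℝ) (a b : X) : pfun g (a + b) = pfun g a + pfun g b := by
  have heq : (a⁺ + b⁺) - (a⁻ + b⁻) = a + b := by
    calc a⁺ + b⁺ - (a⁻ + b⁻) = (a⁺ - a⁻) + (b⁺ - b⁻) := by abel
    _ = a + b := by rw [posPart_sub_negPart, posPart_sub_negPart]
  have h := pfun_decomp g (add_nonneg (posPart_nonneg a) (posPart_nonneg b))
    (add_nonneg (negPart_nonneg a) (negPart_nonneg b)) heq
  rw [h, qf_add g (posPart_nonneg a) (posPart_nonneg b),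
    qf_add g (negPart_nonneg a) (negPart_nonneg b)]
  unfold pfun
  ring

lemma norm_posPart_le' (y : X) : ‖y⁺‖ ≤ ‖y‖ := by
  rw [← norm_abs_eq_norm y]
  refine HasSolidNorm.solid ?_
  rw [abs_of_nonneg (posPart_nonneg y), abs_abs]
  calc y⁺ ≤ y⁺ + y⁻ := le_add_of_nonneg_right (negPart_nonneg y)
  _ = |y| := posPart_add_negPart y

lemma norm_negPart_le' (y : X) : ‖y⁻‖ ≤ ‖y‖ := by
  rw [← norm_abs_eq_norm y]
  refine HasSolidNorm.solid ?_
  rw [abs_of_nonneg (negPart_nonneg y), abs_abs]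
  calc y⁻ ≤ y⁺ + y⁻ := le_add_of_nonneg_left (posPart_nonneg y)
  _ = |y| := posPart_add_negPart y

lemma abs_pfun_le_norm (g : X →L[ℝ] ℝ) (y : X) : |pfun g y| ≤ (2*‖g‖+1) * ‖y‖ := by
  have ha := qf_nonneg g (posPart_nonneg y)
  have hb := qf_nonneg g (negPart_nonneg y)
  have h1 : |pfun g y| ≤ qf g (y⁺) + qf g (y⁻) := by
    unfold pfun
    rw [abs_le]
    constructor <;> linarith
  have h2 : qf g (y⁺) ≤ ‖g‖ * ‖y‖ :=
    (qf_norm_le g (posPart_nonneg y)).trans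
      (mul_le_mul_of_nonneg_left (norm_posPart_le' y) (norm_nonneg g))
  have h3 : qf g (y⁻) ≤ ‖g‖ * ‖y‖ :=
    (qf_norm_le g (negPart_nonneg y)).trans
      (mul_le_mul_of_nonneg_left (norm_negPart_le' y) (norm_nonneg g))
  have h4 : (0:ℝ) ≤ ‖y‖ := norm_nonneg y
  nlinarith

def pP (g : X →L[ℝ] ℝ) : X →L[ℝ] ℝ :=
  AddMonoidHom.toRealLinearMap (AddMonoidHom.mk' (pfun g) (pfun_add g)) (by
    have hlip : LipschitzWith ⟨2*‖g‖+1, by positivity⟩ (pfun g) := by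
      refine LipschitzWith.of_dist_le_mul fun a b => ?_
      have h1 := abs_pfun_le_norm g (a - b)
      have hdiff : pfun g a - pfun g b = pfun g (a - b) := by
        have h2 := pfun_add g (a - b) b
        rw [sub_add_cancel] at h2
        linarith
      rw [Real.dist_eq, hdiff, dist_eq_norm]
      exact h1
    exact hlip.continuous)

lemma pP_apply (g : X →L[ℝ] ℝ) (y : X) : pP g y = qf g (y⁺) - qf g (y⁻) := rfl

lemma pP_eq_qf (g : X →L[ℝ] ℝ) {z : X} (hz : 0 ≤ z) : pP g z = qf g z := by
  rw [pP_apply]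
  have h1 : z⁺ = z := by rw [posPart_def]; exact sup_eq_left.2 hz
  have h2 : z⁻ = 0 := negPart_eq_zero.2 hz
  rw [h1, h2, qf_zero]
  ring

lemma pP_nonneg (g : X →L[ℝ] ℝ) {z : X} (hz : 0 ≤ z) : 0 ≤ pP g z := by
  rw [pP_eq_qf g hz]; exact qf_nonneg g hz

lemma le_pP (g : X →L[ℝ] ℝ) {z : X} (hz : 0 ≤ z) : g z ≤ pP g z := by
  rw [pP_eq_qf g hz]; exact le_qf g hz le_rfl

lemma pP_mono (g : X →L[ℝ] ℝ) {y z : X} (hy : 0 ≤ y) (hyz : y ≤ z) : pP g y ≤ pP g z := by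
  rw [pP_eq_qf g hy, pP_eq_qf g (hy.trans hyz)]
  exact qf_mono g hy hyz

lemma abs_pP_le (g : X →L[ℝ] ℝ) (y : X) : |pP g y| ≤ pP g |y| := by
  rw [abs_le]
  constructor
  · have hpos : (0:X) ≤ |y| + y := by
      rw [abs_add_eq_two_nsmul_posPart]
      exact nsmul_nonneg (posPart_nonneg y) 2
    have h1 := pP_nonneg g hpos
    rw [map_add] at h1
    linarith
  · have h2 := pP_nonneg g (sub_nonneg.2 (le_abs_self y))
    rw [map_sub] at h2
    linarith

lemma qf_neg (g : X →L[ℝ] ℝ) {z : X} (hz : 0 ≤ z) : qf (-g) z = qf g z - g z := by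
  refine le_antisymm ?_ ?_
  · refine qf_le (-g) hz fun w hw hwz => ?_
    have h1 : g (z - w) ≤ qf g z := le_qf g (sub_nonneg.2 hwz) (sub_le_self z hw)
    have h2 : (-g) w = g (z - w) - g z := by
      rw [map_sub, ContinuousLinearMap.neg_apply]
      ring
    linarith
  · have h6 : qf g z ≤ qf (-g) z + g z := by
      refine qf_le g hz fun w hw hwz => ?_
      have h1 : (-g) (z - w) ≤ qf (-g) z := le_qf (-g) (sub_nonneg.2 hwz) (sub_le_self z hw)
      have h2 : (-g) (z - w) = g w - g z := by
        rw [map_sub, ContinuousLinearMap.neg_apply, ContinuousLinearMap.neg_apply]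
        ring
      linarith
    linarith

lemma pP_sub_pP_neg (g : X →L[ℝ] ℝ) (y : X) : pP g y - pP (-g) y = g y := by
  rw [pP_apply, pP_apply, qf_neg g (posPart_nonneg y), qf_neg g (negPart_nonneg y)]
  have h2 : g (y⁺) - g (y⁻) = g y := by rw [← map_sub, posPart_sub_negPart]
  linarith

/-! ### Order continuity facts -/

lemma orderConvNet_abs {D : DirectedType} {u : D.ι → X} (h : OrderConvNet D u 0) :
    OrderConvNet D (fun i => |u i|) 0 := by
  obtain ⟨E, hnet, hdec, hglb, hdom⟩ := h
  refine ⟨E, hnet, hdec, hglb, fun γ => ?_⟩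
  obtain ⟨i₀, hi₀⟩ := hdom γ
  refine ⟨i₀, fun i hi => ?_⟩
  have h1 := hi₀ i hi
  rw [sub_zero] at h1 ⊢
  rwa [abs_abs]

lemma InOCDual.neg' {g : X →L[ℝ] ℝ} (hg : InOCDual g) : InOCDual (-g) := by
  intro D u hu ε hε
  obtain ⟨i₀, hi₀⟩ := hg D u hu ε hε
  refine ⟨i₀, fun i hi => ?_⟩
  have h1 := hi₀ i hi
  simpa [abs_neg] using h1

lemma InOCDual.sub_smul' {g₁ g₂ : X →L[ℝ] ℝ} (h1 : InOCDual g₁) (h2 : InOCDual g₂) (t : ℝ) :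
    InOCDual (g₁ - t • g₂) := by
  intro D u hu ε hε
  obtain ⟨i₁, hi₁⟩ := h1 D u hu (ε/2) (by positivity)
  obtain ⟨i₂, hi₂⟩ := h2 D u hu (ε/(2*(|t|+1))) (by positivity)
  obtain ⟨i₀, hi₀l, hi₀r⟩ := D.directed i₁ i₂
  refine ⟨i₀, fun i hi => ?_⟩
  have a1 := hi₁ i (D.trans _ _ _ hi₀l hi)
  have a2 := hi₂ i (D.trans _ _ _ hi₀r hi)
  show |(g₁ - t • g₂) (u i)| < ε
  have happ : (g₁ - t • g₂) (u i) = g₁ (u i) - t * g₂ (u i) := by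
    simp [ContinuousLinearMap.sub_apply, ContinuousLinearMap.smul_apply, smul_eq_mul]
  rw [happ]
  have h3 : |t * g₂ (u i)| = |t| * |g₂ (u i)| := abs_mul _ _
  have h4 : |t| * |g₂ (u i)| ≤ |t| * (ε/(2*(|t|+1))) :=
    mul_le_mul_of_nonneg_left a2.le (abs_nonneg t)
  have h5 : |t| * (ε/(2*(|t|+1))) < ε/2 := by
    rw [mul_div_assoc', div_lt_div_iff₀ (by positivity) (by norm_num)]
    nlinarith [abs_nonneg t]
  calc |g₁ (u i) - t * g₂ (u i)| ≤ |g₁ (u i)| + |t * g₂ (u i)| := abs_sub _ _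
  _ < ε/2 + ε/2 := by rw [h3]; exact add_lt_add a1 (lt_of_le_of_lt h4 h5)
  _ = ε := by ring

lemma InOCDual.pP' {g : X →L[ℝ] ℝ} (hg : InOCDual g) : InOCDual (pP g) := by
  intro D u hu ε hε
  obtain ⟨E, hnet, hdec, hglb, hdom⟩ := hu
  have hnet_nonneg : ∀ γ, (0:X) ≤ hnet γ := fun γ => hglb.1 ⟨γ, rfl⟩
  have key : ∃ γ, qf g (hnet γ) < ε := by
    by_contra hcon
    push_neg at hcon
    have hw : ∀ γ, ∃ w : X, 0 ≤ w ∧ w ≤ hnet γ ∧ ε/2 < g w := by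
      intro γ
      have hlt : ε/2 < qf g (hnet γ) := lt_of_lt_of_le (by linarith) (hcon γ)
      obtain ⟨r, hrmem, hr⟩ := exists_lt_of_lt_csSup (qs_nonempty g (hnet_nonneg γ)) hlt
      obtain ⟨w, hwmem, rfl⟩ := hrmem
      rw [Set.mem_Icc] at hwmem
      exact ⟨w, hwmem.1, hwmem.2, hr⟩
    choose w hw1 hw2 hw3 using hw
    have hconv : OrderConvNet E w 0 := by
      refine ⟨E, hnet, hdec, hglb, fun γ => ⟨γ, fun γ' hγ' => ?_⟩⟩
      rw [sub_zero, abs_of_nonneg (hw1 γ')]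
      exact (hw2 γ').trans (hdec γ γ' hγ')
    obtain ⟨γ₀, hγ₀⟩ := hg E w hconv (ε/2) (by positivity)
    have h1 := hγ₀ γ₀ (E.refl γ₀)
    have h2 := hw3 γ₀
    have h3 := le_abs_self (g (w γ₀))
    linarith
  obtain ⟨γ, hγ⟩ := key
  obtain ⟨i₀, hi₀⟩ := hdom γ
  refine ⟨i₀, fun i hi => ?_⟩
  have h1 : |u i| ≤ hnet γ := by
    have h0 := hi₀ i hi
    rwa [sub_zero] at h0
  have h2 : |pP g (u i)| ≤ pP g |u i| := abs_pP_le g (u i)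
  have h3 : pP g |u i| ≤ pP g (hnet γ) := pP_mono g (abs_nonneg _) h1
  rw [pP_eq_qf g (hnet_nonneg γ)] at h3
  exact lt_of_le_of_lt (h2.trans h3) hγ

end S14

namespace S14

variable {X : Type*} [NormedAddCommGroup X] [Lattice X] [HasSolidNorm X] [IsOrderedAddMonoid X] [NormedSpace ℝ X]

/-! ### The key decreasing net of functionals -/

def phi (h g₀ : X →L[ℝ] ℝ) (c : ℕ) : X →L[ℝ] ℝ := pP (h - ((c : ℝ) + 1) • g₀)

lemma phi_OC {h g₀ : X →L[ℝ] ℝ} (hh : InOCDual h) (hg : InOCDual g₀) (c : ℕ) :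
    InOCDual (phi h g₀ c) := InOCDual.pP' (InOCDual.sub_smul' hh hg _)

lemma sub_smul_apply (h g₀ : X →L[ℝ] ℝ) (t : ℝ) (u : X) :
    (h - t • g₀) u = h u - t * g₀ u := by
  simp [ContinuousLinearMap.sub_apply, ContinuousLinearMap.smul_apply, smul_eq_mul]

lemma net_iff_tendsto {u : ℕ → ℝ} :
    NetTendstoZero natDir u ↔ Filter.Tendsto u Filter.atTop (nhds 0) := by
  rw [Metric.tendsto_atTop]
  constructor
  · intro H ε hε
    obtain ⟨i₀, hi₀⟩ := H ε hε
    exact ⟨i₀, fun n hn => by rw [Real.dist_eq, sub_zero]; exact hi₀ n hn⟩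
  · intro H ε hε
    obtain ⟨N, hN⟩ := H ε hε
    refine ⟨N, fun n hn => ?_⟩
    have h1 := hN n hn
    rwa [Real.dist_eq, sub_zero] at h1


lemma key_step {h g₀ ψ : X →L[ℝ] ℝ}
    (hhpos : ∀ v : X, 0 ≤ v → 0 ≤ h v) (hg₀pos : ∀ v : X, 0 ≤ v → 0 ≤ g₀ v)
    (hle : ∀ c : ℕ, ∀ v : X, 0 ≤ v → ψ v ≤ phi h g₀ c v)
    {v : X} (hv : 0 ≤ v) {δ : ℝ} (hδ : 0 < δ) :
    ∃ w, 0 ≤ w ∧ w ≤ v ∧ ψ w < δ ∧ g₀ (v - w) < δ := by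
  obtain ⟨c, hc⟩ : ∃ c : ℕ, h v / ((c:ℝ)+1) < δ/2 := by
    obtain ⟨c, hc⟩ := exists_nat_gt (2 * h v / δ)
    refine ⟨c, ?_⟩
    rw [div_lt_iff₀ (by positivity)]
    rw [div_lt_iff₀ hδ] at hc
    nlinarith [hhpos v hv]
  set G : X →L[ℝ] ℝ := h - ((c:ℝ)+1) • g₀ with hG
  have hphi : ∀ u : X, 0 ≤ u → phi h g₀ c u = qf G u := fun u hu => pP_eq_qf G hu
  by_cases hcase : phi h g₀ c v < δ/2
  · refine ⟨v, hv, le_rfl, lt_of_le_of_lt (hle c v hv) (by linarith), ?_⟩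
    simpa using hδ
  · push_neg at hcase
    rw [hphi v hv] at hcase
    obtain ⟨r, hrm, hr⟩ := exists_lt_of_lt_csSup (qs_nonempty G hv)
      (show qf G v - δ/2 < qf G v by linarith)
    obtain ⟨wc, hwcmem, rfl⟩ := hrm
    rw [Set.mem_Icc] at hwcmem
    obtain ⟨hwc0, hwcv⟩ := hwcmem
    have hG0 : 0 ≤ G wc := by linarith
    have hGwc : G wc = h wc - ((c:ℝ)+1) * g₀ wc := sub_smul_apply h g₀ _ wc
    have hgw : g₀ wc < δ/2 := by
      have h1 : h wc ≤ h v := pos_monotone hhpos hwcv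
      rw [hGwc] at hG0
      have h4 : g₀ wc ≤ h v / ((c:ℝ)+1) := by
        rw [le_div_iff₀ (by positivity)]
        nlinarith
      linarith
    refine ⟨v - wc, sub_nonneg.2 hwcv, sub_le_self v hwc0, ?_, ?_⟩
    · have h5 : ψ (v - wc) ≤ phi h g₀ c (v - wc) := hle c _ (sub_nonneg.2 hwcv)
      rw [hphi _ (sub_nonneg.2 hwcv)] at h5
      have h6 : qf G (v - wc) ≤ δ/2 := by
        refine qf_le G (sub_nonneg.2 hwcv) fun u hu huv => ?_
        have h7 : wc + u ≤ v := by
          calc wc + u ≤ wc + (v - wc) := add_le_add_right huv wc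
          _ = v := by abel
        have h8 : G (wc + u) ≤ qf G v := le_qf G (add_nonneg hwc0 hu) h7
        rw [map_add] at h8
        linarith
      linarith
    · have h9 : v - (v - wc) = wc := by abel
      rw [h9]; linarith

lemma key_lemma {h g₀ ψ : X →L[ℝ] ℝ}
    (hψ : InOCDual ψ)
    (hhpos : ∀ v : X, 0 ≤ v → 0 ≤ h v) (hg₀pos : ∀ v : X, 0 ≤ v → 0 ≤ g₀ v)
    (hg₀strict : ∀ x : X, x ≠ 0 → 0 < g₀ |x|)
    (hle : ∀ c : ℕ, ∀ v : X, 0 ≤ v → ψ v ≤ phi h g₀ c v)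
    {z : X} (hz : 0 ≤ z) : ψ z ≤ 0 := by
  by_contra hcon
  push_neg at hcon
  set ε := ψ z with hεdef
  have hε : 0 < ε := hcon
  have step : ∀ (n : ℕ) (v : X), 0 ≤ v →
      ∃ v', 0 ≤ v' ∧ v' ≤ v ∧ ψ (v - v') < ε/2^(n+2) ∧ g₀ v' < ε/2^(n+2) := by
    intro n v hv
    obtain ⟨w, hw0, hwv, hψw, hg⟩ := key_step hhpos hg₀pos hle hv
      (show (0:ℝ) < ε/2^(n+2) by positivity)
    refine ⟨v - w, sub_nonneg.2 hwv, sub_le_self v hw0, ?_, hg⟩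
    have h9 : v - (v - w) = w := by abel
    rwa [h9]
  choose! F hF0 hFle hFψ hFg using step
  set p : ℕ → X := fun n => Nat.rec z (fun n v => F n v) n with hpdef
  have hp0 : p 0 = z := rfl
  have hpsucc : ∀ n, p (n+1) = F n (p n) := fun n => rfl
  have hppos : ∀ n, 0 ≤ p n := by
    intro n
    induction n with
    | zero => exact hz
    | succ n ih => rw [hpsucc]; exact hF0 n (p n) ih
  have hdec : ∀ n, p (n+1) ≤ p n := fun n => by rw [hpsucc]; exact hFle n (p n) (hppos n)
  have hanti : Antitone p := antitone_nat_of_succ_le hdec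
  have htel : ∀ n, ψ (p n - p (n+1)) < ε/2^(n+2) := fun n => by
    rw [hpsucc]; exact hFψ n (p n) (hppos n)
  have hg₀p : ∀ n, g₀ (p (n+1)) < ε/2^(n+2) := fun n => by
    rw [hpsucc]; exact hFg n (p n) (hppos n)
  have hmain : ∀ n, ψ z ≤ ψ (p n) + ε/2 - ε/2^(n+1) := by
    intro n
    induction n with
    | zero =>
      have h20 : (2:ℝ)^(0+1) = 2 := by norm_num
      rw [hp0, h20]
      linarith
    | succ n ih =>
      have h1 := htel n
      have h2 : ψ (p n) - ψ (p (n+1)) = ψ (p n - p (n+1)) := (map_sub ψ _ _).symm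
      have h3 : (2:ℝ)^(n+1+1) = 2 * 2^(n+1) := by ring
      have h4 : ε/2^(n+1) = 2 * (ε/2^(n+1+1)) := by
        rw [h3]
        field_simp
      linarith
  have hglb : IsGLB (Set.range p) 0 := by
    constructor
    · rintro _ ⟨n, rfl⟩; exact hppos n
    · intro b hb
      have hble : ∀ n, b ≤ p n := fun n => hb ⟨n, rfl⟩
      have hbp : ∀ n : ℕ, g₀ (b⁺) ≤ ε/2^(n+2) := by
        intro n
        have h1 : b⁺ ≤ p (n+1) := by
          rw [posPart_def]; exact sup_le (hble (n+1)) (hppos (n+1))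
        exact (pos_monotone hg₀pos h1).trans (hg₀p n).le
      have hb0 : g₀ (b⁺) ≤ 0 := by
        by_contra hc
        push_neg at hc
        obtain ⟨n, hn⟩ := exists_nat_gt (ε / g₀ (b⁺))
        have h2 : ε / g₀ (b⁺) < (2:ℝ)^(n+2) := by
          calc ε / g₀ (b⁺) < (n:ℝ) := hn
          _ ≤ (2:ℝ)^n := by exact_mod_cast (Nat.lt_two_pow_self (n := n)).le
          _ ≤ (2:ℝ)^(n+2) := by
            apply pow_le_pow_right₀ (by norm_num)
            omega
        have h4 := hbp n
        rw [div_lt_iff₀ hc] at h2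
        rw [le_div_iff₀ (by positivity : (0:ℝ) < 2^(n+2))] at h4
        nlinarith
      have hbz : b⁺ = 0 := by
        by_contra hne
        have h1 := hg₀strict _ hne
        rw [abs_of_nonneg (posPart_nonneg b)] at h1
        linarith
      calc b ≤ b⁺ := le_posPart b
      _ = 0 := hbz
  have hconv : OrderConvNet natDir p 0 := by
    refine ⟨natDir, p, fun γ₁ γ₂ h12 => hanti h12, hglb, fun γ => ⟨γ, fun i hi => ?_⟩⟩
    rw [sub_zero, abs_of_nonneg (hppos i)]
    exact hanti hi
  have hten := net_iff_tendsto.1 (hψ natDir p hconv)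
  replace hten := Metric.tendsto_atTop.1 hten
  obtain ⟨n₀, hn₀⟩ := hten (ε/2) (by positivity)
  have h1 : |ψ (p n₀)| < ε/2 := by
    have := hn₀ n₀ (le_refl n₀)
    rwa [Real.dist_eq, sub_zero] at this
  have h2 := hmain n₀
  have h3 : ψ (p n₀) ≤ |ψ (p n₀)| := le_abs_self _
  have h4 : (0:ℝ) < ε/2^(n₀+1) := by positivity
  linarith

/-! ### Sequences: `g₀`-null bounded positive sequences are `σ(X,Xₙ~)`-null -/

lemma step_B (hoc : OCDualOrderContinuous X)
    {g₀ : X →L[ℝ] ℝ} (hg₀OC : InOCDual g₀) (hg₀strict : ∀ x : X, x ≠ 0 → 0 < g₀ |x|)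
    {h : X →L[ℝ] ℝ} (hhOC : InOCDual h) (hhpos : ∀ v : X, 0 ≤ v → 0 ≤ h v)
    {y : ℕ → X} (hy0 : ∀ n, 0 ≤ y n) {M : ℝ} (hyM : ∀ n, ‖y n‖ ≤ M)
    (hg₀y : Filter.Tendsto (fun n => g₀ (y n)) Filter.atTop (nhds 0)) :
    Filter.Tendsto (fun n => h (y n)) Filter.atTop (nhds 0) := by
  have hg₀pos := strictpos_nonneg hg₀strict
  have hM0 : 0 ≤ M := (norm_nonneg (y 0)).trans (hyM 0)
  have hφOC : ∀ c : ℕ, phi h g₀ c ∈ OCDual X := fun c => phi_OC hhOC hg₀OC c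
  have hφdec : ∀ (i j : ℕ), natDir.r i j → dualLE (phi h g₀ j) (phi h g₀ i) := by
    intro i j hij v hv
    show phi h g₀ j v ≤ phi h g₀ i v
    rw [phi, phi, pP_eq_qf _ hv, pP_eq_qf _ hv]
    refine qf_le _ hv fun w hw hwv => ?_
    have h1 : (h - ((j:ℝ)+1) • g₀) w ≤ (h - ((i:ℝ)+1) • g₀) w := by
      rw [sub_smul_apply, sub_smul_apply]
      have h2 := hg₀pos w hw
      have h3 : ((i:ℝ)+1) ≤ ((j:ℝ)+1) := by
        have : (i:ℝ) ≤ (j:ℝ) := Nat.cast_le.2 hij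
        linarith
      nlinarith
    exact h1.trans (le_qf _ hw hwv)
  have hφpos : ∀ c : ℕ, dualLE 0 (phi h g₀ c) := by
    intro c v hv
    rw [ContinuousLinearMap.zero_apply]
    exact pP_nonneg _ hv
  have hlower : ∀ ψ ∈ OCDual X, (∀ c : ℕ, dualLE ψ (phi h g₀ c)) → dualLE ψ 0 := by
    intro ψ hψmem hψle v hv
    rw [ContinuousLinearMap.zero_apply]
    exact key_lemma hψmem hhpos hg₀pos hg₀strict (fun c u hu => hψle c u hu) hv
  have hnet := net_iff_tendsto.1 (hoc natDir (phi h g₀) hφOC hφdec hφpos hlower)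
  replace hnet := Metric.tendsto_atTop.1 hnet
  rw [Metric.tendsto_atTop] at hg₀y ⊢
  intro ε hε
  obtain ⟨c₀, hc₀⟩ := hnet (ε/(2*(M+1))) (by positivity)
  have hφn : ‖phi h g₀ c₀‖ < ε/(2*(M+1)) := by
    have h1 := hc₀ c₀ (le_refl c₀)
    rwa [Real.dist_eq, sub_zero, abs_of_nonneg (norm_nonneg _)] at h1
  obtain ⟨N, hN⟩ := hg₀y (ε/(2*((c₀:ℝ)+1))) (by positivity)
  refine ⟨N, fun n hn => ?_⟩
  have hg1 : g₀ (y n) < ε/(2*((c₀:ℝ)+1)) := by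
    have h1 := hN n hn
    rw [Real.dist_eq, sub_zero] at h1
    exact lt_of_le_of_lt (le_abs_self _) h1
  have hg2 : 0 ≤ g₀ (y n) := hg₀pos _ (hy0 n)
  have h1 : h (y n) = (h - ((c₀:ℝ)+1) • g₀) (y n) + ((c₀:ℝ)+1) * g₀ (y n) := by
    rw [sub_smul_apply]; ring
  have h2 : (h - ((c₀:ℝ)+1) • g₀) (y n) ≤ phi h g₀ c₀ (y n) := le_pP _ (hy0 n)
  have h3 : phi h g₀ c₀ (y n) ≤ ‖phi h g₀ c₀‖ * ‖y n‖ := by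
    calc phi h g₀ c₀ (y n) ≤ |phi h g₀ c₀ (y n)| := le_abs_self _
    _ = ‖phi h g₀ c₀ (y n)‖ := (Real.norm_eq_abs _).symm
    _ ≤ _ := (phi h g₀ c₀).le_opNorm _
  have h4 : ‖phi h g₀ c₀‖ * ‖y n‖ ≤ ‖phi h g₀ c₀‖ * M :=
    mul_le_mul_of_nonneg_left (hyM n) (norm_nonneg _)
  have h5 : ‖phi h g₀ c₀‖ * M < ε/2 := by
    have h6 : ‖phi h g₀ c₀‖ * M ≤ (ε/(2*(M+1))) * M :=
      mul_le_mul_of_nonneg_right hφn.le hM0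
    have h7 : (ε/(2*(M+1))) * M < ε/2 := by
      rw [div_mul_eq_mul_div, div_lt_div_iff₀ (by positivity) (by norm_num)]
      nlinarith
    linarith
  have h6 : ((c₀:ℝ)+1) * g₀ (y n) < ε/2 := by
    have h7 : ((c₀:ℝ)+1) * g₀ (y n) < ((c₀:ℝ)+1) * (ε/(2*((c₀:ℝ)+1))) :=
      mul_lt_mul_of_pos_left hg1 (by positivity)
    have h8 : ((c₀:ℝ)+1) * (ε/(2*((c₀:ℝ)+1))) = ε/2 := by
      field_simp
    linarith
  have h7 : 0 ≤ h (y n) := hhpos _ (hy0 n)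
  rw [Real.dist_eq, sub_zero, abs_of_nonneg h7]
  linarith

end S14

namespace S14

variable {X : Type*} [NormedAddCommGroup X] [Lattice X] [HasSolidNorm X] [IsOrderedAddMonoid X] [NormedSpace ℝ X]

/-! ### Separation: the `σ(X,Xₙ~)`-closure is contained in the `g₀`-seminorm closure -/

lemma step_A {g₀ : X →L[ℝ] ℝ} (hg₀OC : InOCDual g₀)
    (hg₀strict : ∀ x : X, x ≠ 0 → 0 < g₀ |x|)
    {C : Set X} (hC : Convex ℝ C) {D : DirectedType} {f : D.ι → X} {x : X}
    (hfC : ∀ i, f i ∈ C) (hconv : SigmaNConvNet D f x) {ε₀ : ℝ} (hε₀ : 0 < ε₀) :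
    ∃ c ∈ C, g₀ |c - x| < ε₀ := by
  by_contra hcon
  push_neg at hcon
  have hg₀pos := strictpos_nonneg hg₀strict
  set p : X → ℝ := fun y => g₀ |y| with hpdef
  have hp0 : p 0 = 0 := by simp [hpdef]
  have hpneg : ∀ y, p (-y) = p y := fun y => by simp [hpdef, abs_neg]
  have hpnonneg : ∀ y, 0 ≤ p y := fun y => hg₀pos _ (abs_nonneg y)
  have hpadd : ∀ y z, p (y + z) ≤ p y + p z := by
    intro y z
    have h1 : |y + z| ≤ |y| + |z| := abs_add_le y z
    have h2 := pos_monotone hg₀pos h1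
    rw [map_add] at h2
    exact h2
  have hphomog : ∀ (t : ℝ), 0 ≤ t → ∀ y, p (t • y) = t * p y := by
    intro t ht y
    show g₀ |t • y| = t * g₀ |y|
    rw [abs_smul_eq t ht y, map_smul, smul_eq_mul]
  have hpnorm : ∀ y, p y ≤ ‖g₀‖ * ‖y‖ := by
    intro y
    have h1 : ‖g₀ (|y|)‖ ≤ ‖g₀‖ * ‖(|y| : X)‖ := g₀.le_opNorm _
    rw [Real.norm_eq_abs, norm_abs_eq_norm] at h1
    exact le_trans (le_abs_self _) h1
  obtain ⟨i₀⟩ := D.nonempty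
  set a₀ : X := f i₀ - x with ha₀def
  have ha₀ : ε₀ ≤ p a₀ := hcon _ (hfC i₀)
  set Bp : Set X := {b | p b < ε₀/2} with hBpdef
  set A : Set X := (fun c => c - x - a₀) '' C with hAdef
  set V : Set X := A + Bp with hVdef
  have hBpconv : Convex ℝ Bp := by
    intro v₁ hv₁ v₂ hv₂ s t hs ht hst
    simp only [hBpdef, Set.mem_setOf_eq] at hv₁ hv₂ ⊢
    have h1 : p (s • v₁ + t • v₂) ≤ s * p v₁ + t * p v₂ := by
      calc p (s • v₁ + t • v₂) ≤ p (s • v₁) + p (t • v₂) := hpadd _ _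
      _ = s * p v₁ + t * p v₂ := by rw [hphomog s hs, hphomog t ht]
    rcases eq_or_lt_of_le hs with rfl | hs'
    · have ht1 : t = 1 := by linarith
      have h2 := hpnonneg v₁
      nlinarith
    · have h3 : s * p v₁ < s * (ε₀/2) := mul_lt_mul_of_pos_left hv₁ hs'
      have h4 : t * p v₂ ≤ t * (ε₀/2) := mul_le_mul_of_nonneg_left hv₂.le ht
      nlinarith
  have hAconv : Convex ℝ A := by
    have h1 : A = (fun z => -x - a₀ + z) '' C := by
      ext v
      constructor
      · rintro ⟨c, hc, rfl⟩; exact ⟨c, hc, by abel⟩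
      · rintro ⟨c, hc, rfl⟩; exact ⟨c, hc, by abel⟩
    rw [h1]
    exact hC.translate _
  have hVconv : Convex ℝ V := hAconv.add hBpconv
  have hball : ∀ b, p b < ε₀/2 → b ∈ V := by
    intro b hb
    have hA0 : (0:X) ∈ A := ⟨f i₀, hfC i₀, by rw [ha₀def]; abel⟩
    have := Set.add_mem_add hA0 (show b ∈ Bp from hb)
    rwa [zero_add] at this
  have h0V : (0:X) ∈ V := hball 0 (by rw [hp0]; positivity)
  set z₀ : X := -a₀ with hz₀def
  have hz₀V : z₀ ∉ V := by
    intro hmem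
    rw [hVdef, Set.mem_add] at hmem
    obtain ⟨a, ha, b, hb, hab⟩ := hmem
    obtain ⟨c, hc, rfl⟩ := ha
    have hbeq : b = -(c - x) := by
      have h1 : (c - x - a₀) + b = -a₀ := hab
      have h2 : b = -a₀ - (c - x - a₀) := by rw [← h1]; abel
      rw [h2]; abel
    have h1 : p b = p (c - x) := by rw [hbeq, hpneg]
    have h2 := hcon c hc
    have h3 : p b < ε₀/2 := hb
    linarith
  set T : X → Set ℝ := fun v => {t : ℝ | 0 < t ∧ t⁻¹ • v ∈ V} with hTdef
  have hTne : ∀ v, (T v).Nonempty := by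
    intro v
    have htpos : (0:ℝ) < (p v + 1) * (2/ε₀) := by
      have := hpnonneg v; positivity
    refine ⟨(p v + 1) * (2/ε₀), htpos, ?_⟩
    apply hball
    rw [hphomog _ (by positivity) v, inv_mul_eq_div, div_lt_iff₀ htpos]
    have heq : ε₀/2 * ((p v + 1) * (2/ε₀)) = p v + 1 := by field_simp
    rw [heq]
    linarith
  have hTbdd : ∀ v, BddBelow (T v) := fun v => ⟨0, fun t ht => ht.1.le⟩
  set N : X → ℝ := fun v => sInf (T v) with hNdef
  have hNle : ∀ v t, 0 < t → t⁻¹ • v ∈ V → N v ≤ t := fun v t h1 h2 => csInf_le (hTbdd v) ⟨h1, h2⟩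
  have hNnonneg : ∀ v, 0 ≤ N v := fun v => le_csInf (hTne v) fun t ht => ht.1.le
  have hNball : ∀ v, N v ≤ (2/ε₀) * p v := by
    intro v
    refine le_of_forall_pos_le_add fun δ hδ => ?_
    have htpos : (0:ℝ) < (2/ε₀) * p v + δ := by
      have := hpnonneg v; positivity
    apply hNle _ _ htpos
    apply hball
    rw [hphomog _ (by positivity) v, inv_mul_eq_div, div_lt_iff₀ htpos]
    have heq : ε₀/2 * ((2/ε₀) * p v + δ) = p v + (ε₀/2)*δ := by field_simp
    rw [heq]
    nlinarith
  have hNadd : ∀ u v, N (u + v) ≤ N u + N v := by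
    intro u v
    have core : ∀ s ∈ T u, ∀ t ∈ T v, N (u + v) ≤ s + t := by
      rintro s ⟨hs, hsV⟩ t ⟨ht, htV⟩
      apply hNle _ _ (by positivity)
      have heq : (s + t)⁻¹ • (u + v) = (s/(s+t)) • (s⁻¹ • u) + (t/(s+t)) • (t⁻¹ • v) := by
        rw [smul_smul, smul_smul, smul_add]
        congr 2 <;> field_simp
      rw [heq]
      exact hVconv hsV htV (by positivity) (by positivity) (by field_simp)
    have h1 : ∀ t ∈ T v, N (u+v) - t ≤ N u := fun t ht =>
      le_csInf (hTne u) fun s hs => by linarith [core s hs t ht]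
    have h2 : N (u+v) - N u ≤ N v := le_csInf (hTne v) fun t ht => by linarith [h1 t ht]
    linarith
  have hNsmul : ∀ (cc : ℝ), 0 < cc → ∀ v, N (cc • v) = cc * N v := by
    have hhalf : ∀ (cc : ℝ), 0 < cc → ∀ v, N (cc • v) ≤ cc * N v := by
      intro cc hcc v
      have h1 : ∀ t ∈ T v, N (cc • v) ≤ cc * t := by
        rintro t ⟨ht, htV⟩
        apply hNle _ _ (by positivity)
        have heq : (cc * t)⁻¹ • (cc • v) = t⁻¹ • v := by
          rw [smul_smul]
          congr 1
          field_simp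
        rw [heq]
        exact htV
      have h2 : N (cc • v) / cc ≤ N v := le_csInf (hTne v) fun t ht => by
        rw [div_le_iff₀ hcc]
        linarith [h1 t ht]
      rw [div_le_iff₀ hcc] at h2
      linarith
    intro cc hcc v
    refine le_antisymm (hhalf cc hcc v) ?_
    have h3 := hhalf cc⁻¹ (by positivity) (cc • v)
    rw [smul_smul, inv_mul_cancel₀ hcc.ne', one_smul] at h3
    have h4 : cc * N v ≤ cc * (cc⁻¹ * N (cc • v)) := mul_le_mul_of_nonneg_left h3 hcc.le
    rw [← mul_assoc, mul_inv_cancel₀ hcc.ne', one_mul] at h4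
    exact h4
  have hNz₀ : 1 ≤ N z₀ := by
    refine le_csInf (hTne z₀) fun t ht => ?_
    obtain ⟨ht0, htV⟩ := ht
    by_contra hlt
    push_neg at hlt
    have hmem : z₀ ∈ V := by
      have h1 := hVconv htV h0V ht0.le (by linarith : (0:ℝ) ≤ 1 - t) (by ring)
      rwa [smul_zero, add_zero, smul_smul, mul_inv_cancel₀ ht0.ne', one_smul] at h1
    exact hz₀V hmem
  have hNmem : ∀ v ∈ V, N v ≤ 1 := fun v hv => hNle v 1 one_pos (by rwa [inv_one, one_smul])
  have hz₀ne : z₀ ≠ 0 := by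
    intro hzz
    have h1 : a₀ = 0 := by rwa [hz₀def, neg_eq_zero] at hzz
    rw [h1, hp0] at ha₀
    linarith
  have hdom : ∀ u : (LinearPMap.mkSpanSingleton (K := ℝ) (L := ℝ) (σ := RingHom.id ℝ) z₀ (N z₀) hz₀ne).domain,
      (LinearPMap.mkSpanSingleton (K := ℝ) (L := ℝ) (σ := RingHom.id ℝ) z₀ (N z₀) hz₀ne) u ≤ N u := by
    rintro ⟨u, hu⟩
    obtain ⟨t, rfl⟩ := Submodule.mem_span_singleton.1 hu
    have happ : (LinearPMap.mkSpanSingleton (K := ℝ) (L := ℝ) (σ := RingHom.id ℝ) z₀ (N z₀) hz₀ne) ⟨t • z₀, hu⟩ = t • N z₀ :=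
      LinearPMap.mkSpanSingleton'_apply _ _ _ t _
    rw [happ, smul_eq_mul]
    rcases le_or_gt t 0 with ht | ht
    · have h1 : t * N z₀ ≤ 0 := mul_nonpos_of_nonpos_of_nonneg ht (hNnonneg z₀)
      exact h1.trans (hNnonneg _)
    · rw [hNsmul t ht z₀]
  obtain ⟨F, hFeq, hFle⟩ := exists_extension_of_le_sublinear
    (LinearPMap.mkSpanSingleton (K := ℝ) (L := ℝ) (σ := RingHom.id ℝ) z₀ (N z₀) hz₀ne) N
    (fun cc hcc xx => hNsmul cc hcc xx) hNadd hdom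
  have hFz₀ : F z₀ = N z₀ := by
    have h1 := hFeq ⟨z₀, Submodule.mem_span_singleton_self z₀⟩
    rwa [LinearPMap.mkSpanSingleton_apply ℝ ℝ hz₀ne (N z₀)] at h1
  have hFabs : ∀ y, |F y| ≤ (2/ε₀) * p y := by
    intro y
    rw [abs_le]
    constructor
    · have h1 := hFle (-y)
      have h2 := hNball (-y)
      rw [hpneg] at h2
      have h3 : F (-y) = -F y := map_neg F y
      linarith
    · exact (hFle y).trans (hNball y)
  have hbound : ∀ y : X, ‖F y‖ ≤ ((2/ε₀) * ‖g₀‖) * ‖y‖ := by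
    intro y
    rw [Real.norm_eq_abs]
    calc |F y| ≤ (2/ε₀) * p y := hFabs y
    _ ≤ (2/ε₀) * (‖g₀‖ * ‖y‖) := mul_le_mul_of_nonneg_left (hpnorm y) (by positivity)
    _ = ((2/ε₀) * ‖g₀‖) * ‖y‖ := by ring
  set F' : X →L[ℝ] ℝ := LinearMap.mkContinuous F _ hbound with hF'def
  have hF'app : ∀ y, F' y = F y := fun y => rfl
  have hF'OC : InOCDual F' := by
    intro D' u hu ε hε
    obtain ⟨i₁, hi₁⟩ := hg₀OC D' (fun i => |u i|) (orderConvNet_abs hu) (ε * ε₀/2) (by positivity)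
    refine ⟨i₁, fun i hi => ?_⟩
    have h1 := hi₁ i hi
    have h2 : |F (u i)| ≤ (2/ε₀) * p (u i) := hFabs (u i)
    have h3 : p (u i) ≤ |g₀ (|u i|)| := le_abs_self _
    have h4 : (2/ε₀) * p (u i) < ε := by
      have h5 : (2/ε₀) * (ε * ε₀/2) = ε := by field_simp
      have h6 : (0:ℝ) < 2/ε₀ := by positivity
      calc (2/ε₀) * p (u i) ≤ (2/ε₀) * |g₀ (|u i|)| := mul_le_mul_of_nonneg_left h3 h6.le
      _ < (2/ε₀) * (ε * ε₀/2) := mul_lt_mul_of_pos_left h1 h6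
      _ = ε := h5
    show |F' (u i)| < ε
    rw [hF'app]
    exact lt_of_le_of_lt h2 h4
  obtain ⟨bh, hbh1, hbh2⟩ : ∃ b, p b < ε₀/2 ∧ 0 < F b := by
    by_contra hb
    push_neg at hb
    have hF0 : ∀ y, F y = 0 := by
      intro y
      have hpy := hpnonneg y
      have ht : (0:ℝ) < (ε₀/4)/(p y + 1) := by positivity
      set t := (ε₀/4)/(p y + 1) with htdef
      have h1 : p (t • y) < ε₀/2 := by
        rw [hphomog t ht.le y]
        have h2 : t * (p y + 1) = ε₀/4 := by
          rw [htdef]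
          field_simp
        nlinarith
      have h3 : p (t • (-y)) < ε₀/2 := by
        rw [smul_neg, hpneg]
        exact h1
      have h4 := hb _ h1
      have h5 := hb _ h3
      rw [map_smul, smul_eq_mul] at h4
      rw [map_smul, smul_eq_mul, map_neg, mul_neg] at h5
      have h6 : t * F y = 0 := le_antisymm h4 (by linarith)
      rcases mul_eq_zero.1 h6 with h7 | h7
      · exact absurd h7 ht.ne'
      · exact h7
    rw [hF0 z₀] at hFz₀
    linarith [hNz₀]
  have hsep : ∀ c ∈ C, F (c - x) ≤ -F bh := by
    intro c hc
    have hmemA : (c - x - a₀) ∈ A := ⟨c, hc, rfl⟩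
    have hmem : (c - x - a₀) + bh ∈ V := Set.add_mem_add hmemA hbh1
    have h1 := (hFle _).trans (hNmem _ hmem)
    have h2 : F ((c - x - a₀) + bh) = F (c - x) - F a₀ + F bh := by
      rw [map_add, map_sub]
    have h3 : F a₀ = -N z₀ := by
      have h4 : F a₀ = -F z₀ := by rw [hz₀def, map_neg, neg_neg]
      rw [h4, hFz₀]
    rw [h2, h3] at h1
    linarith [hNz₀]
  obtain ⟨j₀, hj₀⟩ := hconv F' hF'OC (F bh) hbh2
  have h1 : |F' (f j₀) - F' x| < F bh := hj₀ j₀ (D.refl j₀)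
  have h2 : F' (f j₀) - F' x = F (f j₀ - x) := by rw [hF'app, hF'app, ← map_sub]
  rw [h2] at h1
  have h3 := hsep (f j₀) (hfC j₀)
  have h4 := neg_abs_le (F (f j₀ - x))
  linarith

end S14

namespace S14

variable {X : Type*} [NormedAddCommGroup X] [Lattice X] [HasSolidNorm X] [IsOrderedAddMonoid X] [NormedSpace ℝ X]

lemma abs_sub_closure_subset {C : Set X} : AbsSigmaSeqClosure C ⊆ SigmaNClosure C := by
  rintro x ⟨s, hsC, hconv⟩
  refine ⟨natDir, s, hsC, ?_⟩
  intro g hg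
  refine net_iff_tendsto.2 ?_
  have h1 := hconv (pP g) (InOCDual.pP' hg)
  have h2 := hconv (pP (-g)) (InOCDual.pP' (InOCDual.neg' hg))
  have key : ∀ n, |g (s n) - g x| ≤ pP g (|s n - x|) + pP (-g) (|s n - x|) := by
    intro n
    have e1 : g (s n) - g x = g (s n - x) := (map_sub g _ _).symm
    have e2 : g (s n - x) = pP g (s n - x) - pP (-g) (s n - x) := (pP_sub_pP_neg g _).symm
    have e3 : |pP g (s n - x)| ≤ pP g (|s n - x|) := abs_pP_le g _
    have e4 : |pP (-g) (s n - x)| ≤ pP (-g) (|s n - x|) := abs_pP_le (-g) _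
    rw [e1, e2]
    calc |pP g (s n - x) - pP (-g) (s n - x)|
        ≤ |pP g (s n - x)| + |pP (-g) (s n - x)| := abs_sub _ _
    _ ≤ _ := add_le_add e3 e4
  have hsum := h1.add h2
  rw [add_zero] at hsum
  exact squeeze_zero_norm (fun n => by rw [Real.norm_eq_abs]; exact key n) hsum

end S14

/-- if `X_n^~` is order continuous and contains a strictly positive
element, then for every norm bounded convex set `C`, the `σ(X, X_n^~)`-closure of
`C` equals its `|σ|(X, X_n^~)`-sequential closure. -/
theorem stmt14 {X : Type*} [NormedAddCommGroup X] [Lattice X] [HasSolidNorm X] [IsOrderedAddMonoid X] [NormedSpace ℝ X] [CompleteSpace X]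
    (hoc : OCDualOrderContinuous X) (hsp : HasStrictlyPositiveOCFunctional X)
    (C : Set X) (hC : Convex ℝ C) (hbdd : ∃ M : ℝ, ∀ x ∈ C, ‖x‖ ≤ M) :
    SigmaNClosure C = AbsSigmaSeqClosure C := by
  obtain ⟨g₀, hg₀OC, hg₀strict⟩ := hsp
  obtain ⟨M, hM⟩ := hbdd
  apply Set.Subset.antisymm
  · rintro x ⟨D, f, hfC, hfconv⟩
    have hg₀pos := S14.strictpos_nonneg hg₀strict
    have hsel : ∀ n : ℕ, ∃ c ∈ C, g₀ |c - x| < 1/((n:ℝ)+1) := fun n =>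
      S14.step_A hg₀OC hg₀strict hC hfC hfconv (by positivity)
    choose s hsC hs using hsel
    refine ⟨s, hsC, ?_⟩
    intro g hg
    have hy0 : ∀ n, (0:X) ≤ |s n - x| := fun n => abs_nonneg _
    have hyM : ∀ n, ‖(|s n - x| : X)‖ ≤ M + ‖x‖ := by
      intro n
      rw [norm_abs_eq_norm]
      calc ‖s n - x‖ ≤ ‖s n‖ + ‖x‖ := norm_sub_le _ _
      _ ≤ M + ‖x‖ := add_le_add_left (hM _ (hsC n)) _
    have hg₀y : Filter.Tendsto (fun n => g₀ (|s n - x|)) Filter.atTop (nhds 0) := by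
      refine squeeze_zero (fun n => hg₀pos _ (hy0 n)) (fun n => (hs n).le) ?_
      exact tendsto_one_div_add_atTop_nhds_zero_nat
    have hP := S14.step_B hoc hg₀OC hg₀strict (S14.InOCDual.pP' hg)
      (fun v hv => S14.pP_nonneg g hv) hy0 hyM hg₀y
    have hN := S14.step_B hoc hg₀OC hg₀strict (S14.InOCDual.pP' (S14.InOCDual.neg' hg))
      (fun v hv => S14.pP_nonneg (-g) hv) hy0 hyM hg₀y
    have hdiff := hP.sub hN
    rw [sub_zero] at hdiff
    have heq : (fun n => g (|s n - x|)) =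
        fun n => S14.pP g (|s n - x|) - S14.pP (-g) (|s n - x|) :=
      funext fun n => (S14.pP_sub_pP_neg g _).symm
    rw [heq]
    exact hdiff
  · exact S14.abs_sub_closure_subset
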